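/- Let Q' be an axis-parallel cube in ℝⁿ. There is a Whitney decomposition W of Q': a countable family of pairwise non-overlapping axis-parallel cubes Q with ℓ(Q) = dist(Q, ∂Q') whose union is Q' up to a set of measure zero, obtained by taking the central cube of side ℓ(Q')/3 and then dyadically subdividing towards the boundary. -/

import Mathlib

open MeasureTheory Metric ENNReal


namespace W17

def gn (k : ℤ) : ℕ := (max k (-(k + 1))).toNat

lemma gn_cast (k : ℤ) : (gn k : ℤ) = max k (-(k + 1)) := Int.toNat_of_nonneg (by omega)

lemma gn_of_nonneg {k : ℤ} (h : 0 ≤ k) : (gn k : ℤ) = k := by rw [gn_cast]; omega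

lemma gn_of_neg {k : ℤ} (h : k < 0) : (gn k : ℤ) = -(k + 1) := by rw [gn_cast]; omega

lemma gn_natCast (a : ℕ) : gn (a : ℤ) = a := by
  have := gn_of_nonneg (Int.ofNat_nonneg a); exact_mod_cast this

noncomputable def Lr (r : ℝ) (m : ℕ) : ℝ := r / (3 * 2 ^ m)

def Nn (m : ℕ) : ℕ := 3 * 2 ^ m - 2

noncomputable def ctr {n : ℕ} (c : Fin n → ℝ) (r : ℝ) (m : ℕ) (k : Fin n → ℤ) : Fin n → ℝ :=
  fun i => c i + ((k i : ℝ) + 1 / 2) * Lr r m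

abbrev idx (n : ℕ) : Type :=
  Σ m : ℕ, {k : Fin n → ℤ // (Finset.univ.sup fun i => gn (k i)) = Nn m}

instance (n : ℕ) : Countable (idx n) := by unfold idx; infer_instance

section
variable {n : ℕ} {r : ℝ}

lemma L_pos (hr : 0 < r) (m : ℕ) : 0 < Lr r m := by unfold Lr; positivity

lemma L_anti (hr : 0 < r) {m m' : ℕ} (h : m ≤ m') : Lr r m' ≤ Lr r m := by
  unfold Lr
  have h2 : (3:ℝ) * 2 ^ m ≤ 3 * 2 ^ m' := by
    have := pow_le_pow_right₀ (a := (2:ℝ)) one_le_two h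
    linarith
  exact div_le_div_of_nonneg_left hr.le (by positivity) h2 |>.trans_eq rfl

lemma L_half (hr : 0 < r) (m : ℕ) : 2 * Lr r (m + 1) = Lr r m := by
  unfold Lr
  rw [pow_succ]
  field_simp

lemma Nn_cast (m : ℕ) : (Nn m : ℝ) = 3 * 2 ^ m - 2 := by
  unfold Nn
  have h : (2:ℕ) ≤ 3 * 2 ^ m := by have : (1:ℕ) ≤ 2 ^ m := Nat.one_le_two_pow; omega
  push_cast [Nat.cast_sub h]
  ring

lemma NL (hr : 0 < r) (m : ℕ) : (Nn m : ℝ) * Lr r m = r - 2 * Lr r m := by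
  rw [Nn_cast]; unfold Lr; field_simp

lemma NL1 (hr : 0 < r) (m : ℕ) : ((Nn m : ℝ) + 1) * Lr r m = r - Lr r m := by
  rw [Nn_cast]; unfold Lr; field_simp; ring

lemma L0 (hr : 0 < r) : r - 2 * Lr r 0 = r / 3 := by unfold Lr; norm_num; ring

variable (c : Fin n → ℝ)

lemma mem_cube_iff (hr : 0 < r) (m : ℕ) (k : Fin n → ℤ) (x : Fin n → ℝ) :
    x ∈ ball (ctr c r m k) (Lr r m / 2) ↔
      ∀ i, (k i : ℝ) * Lr r m < x i - c i ∧ x i - c i < ((k i : ℝ) + 1) * Lr r m := by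
  have hL := L_pos hr m
  rw [mem_ball, dist_pi_lt_iff (by positivity)]
  refine forall_congr' fun i => ?_
  rw [Real.dist_eq, abs_lt, ctr,
    show x i - (c i + ((k i : ℝ) + 1 / 2) * Lr r m)
      = (x i - c i) - (k i : ℝ) * Lr r m - Lr r m / 2 by ring]
  constructor <;> intro h <;> constructor <;> nlinarith [h.1, h.2]

lemma mem_cube_cb (hr : 0 < r) (m : ℕ) (k : Fin n → ℤ) (x : Fin n → ℝ)
    (h : x ∈ closedBall (ctr c r m k) (Lr r m / 2)) :
    ∀ i, (k i : ℝ) * Lr r m ≤ x i - c i ∧ x i - c i ≤ ((k i : ℝ) + 1) * Lr r m := by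
  have hL := L_pos hr m
  rw [mem_closedBall, dist_pi_le_iff (by positivity)] at h
  intro i
  have hi := h i
  rw [Real.dist_eq, abs_le, ctr] at hi
  constructor <;> nlinarith [hi.1, hi.2]


lemma abs_bounds_lt {L t : ℝ} (hL : 0 < L) {k : ℤ} (h1 : (k : ℝ) * L < t)
    (h2 : t < ((k : ℝ) + 1) * L) :
    ((gn k : ℝ)) * L < |t| ∧ |t| < ((gn k : ℝ) + 1) * L := by
  rcases le_or_gt 0 k with hk | hk
  · have hg : ((gn k : ℝ)) = (k : ℝ) := by exact_mod_cast gn_of_nonneg hk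
    have hk' : (0:ℝ) ≤ (k:ℝ) := by exact_mod_cast hk
    have ht : 0 < t := lt_of_le_of_lt (by positivity) h1
    rw [abs_of_pos ht, hg]
    exact ⟨h1, h2⟩
  · have hg : ((gn k : ℝ)) = -((k : ℝ) + 1) := by exact_mod_cast gn_of_neg hk
    have hk' : (k:ℝ) + 1 ≤ 0 := by
      have : k + 1 ≤ 0 := by omega
      exact_mod_cast this
    have ht : t < 0 := lt_of_lt_of_le h2 (by nlinarith)
    rw [abs_of_neg ht, hg]
    constructor <;> nlinarith

lemma abs_bounds_le {L t : ℝ} (hL : 0 < L) {k : ℤ} (h1 : (k : ℝ) * L ≤ t)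
    (h2 : t ≤ ((k : ℝ) + 1) * L) : |t| ≤ ((gn k : ℝ) + 1) * L := by
  rcases le_or_gt 0 k with hk | hk
  · have hg : ((gn k : ℝ)) = (k : ℝ) := by exact_mod_cast gn_of_nonneg hk
    have hk' : (0:ℝ) ≤ (k:ℝ) := by exact_mod_cast hk
    rw [abs_le, hg]
    constructor <;> nlinarith
  · have hg : ((gn k : ℝ)) = -((k : ℝ) + 1) := by exact_mod_cast gn_of_neg hk
    have hk' : (k:ℝ) + 1 ≤ 0 := by
      have : k + 1 ≤ 0 := by omega
      exact_mod_cast this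
    rw [abs_le, hg]
    constructor <;> nlinarith

end
section
variable {n : ℕ} {r : ℝ} (hn : 0 < n) (c : Fin n → ℝ) (hr : 0 < r)
include hn hr

lemma cube_dist {m : ℕ} {k : Fin n → ℤ}
    (hk : (Finset.univ.sup fun i => gn (k i)) = Nn m) (x : Fin n → ℝ)
    (hx : x ∈ ball (ctr c r m k) (Lr r m / 2)) :
    r - 2 * Lr r m < dist x c ∧ dist x c < r - Lr r m := by
  have hL := L_pos hr m
  have hb := (mem_cube_iff c hr m k x).1 hx
  have habs : ∀ i, (gn (k i) : ℝ) * Lr r m < |x i - c i| ∧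
      |x i - c i| < ((gn (k i) : ℝ) + 1) * Lr r m :=
    fun i => abs_bounds_lt hL (hb i).1 (hb i).2
  constructor
  · obtain ⟨j, -, hj⟩ := Finset.exists_mem_eq_sup (Finset.univ : Finset (Fin n))
      ⟨⟨0, hn⟩, Finset.mem_univ _⟩ (fun i => gn (k i))
    have hgj : gn (k j) = Nn m := hj.symm.trans hk
    have h1 : (Nn m : ℝ) * Lr r m < |x j - c j| := by rw [← hgj]; exact (habs j).1
    have h2 : |x j - c j| ≤ dist x c := by
      have := dist_le_pi_dist x c j; rwa [Real.dist_eq] at this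
    rw [← NL hr m]; linarith
  · rw [← NL1 hr m, dist_pi_lt_iff (by positivity)]
    intro i
    have hle : gn (k i) ≤ Nn m := hk ▸ Finset.le_sup (f := fun i => gn (k i)) (Finset.mem_univ i)
    have hle' : (gn (k i) : ℝ) ≤ (Nn m : ℝ) := by exact_mod_cast hle
    rw [Real.dist_eq]
    nlinarith [(habs i).2]

lemma cube_cb_dist {m : ℕ} {k : Fin n → ℤ}
    (hk : (Finset.univ.sup fun i => gn (k i)) = Nn m) (x : Fin n → ℝ)
    (hx : x ∈ closedBall (ctr c r m k) (Lr r m / 2)) :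
    dist x c ≤ r - Lr r m := by
  have hL := L_pos hr m
  have hb := mem_cube_cb c hr m k x hx
  rw [← NL1 hr m, dist_pi_le_iff (by positivity)]
  intro i
  have habs := abs_bounds_le hL (hb i).1 (hb i).2
  have hle : gn (k i) ≤ Nn m := hk ▸ Finset.le_sup (f := fun i => gn (k i)) (Finset.mem_univ i)
  have hle' : (gn (k i) : ℝ) ≤ (Nn m : ℝ) := by exact_mod_cast hle
  rw [Real.dist_eq]
  nlinarith

lemma cube_corner {m : ℕ} {k : Fin n → ℤ}
    (hk : (Finset.univ.sup fun i => gn (k i)) = Nn m) :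
    ∃ x ∈ closedBall (ctr c r m k) (Lr r m / 2), dist x c = r - Lr r m := by
  have hL := L_pos hr m
  set y : Fin n → ℝ := fun i => c i + (if 0 ≤ k i then ((k i : ℝ) + 1) else (k i : ℝ)) * Lr r m
    with hy
  have hyabs : ∀ i, |y i - c i| = ((gn (k i) : ℝ) + 1) * Lr r m := by
    intro i
    simp only [hy]
    split_ifs with h
    · have hg : ((gn (k i) : ℝ)) = (k i : ℝ) := by exact_mod_cast gn_of_nonneg h
      have hk' : (0:ℝ) ≤ (k i : ℝ) := by exact_mod_cast h
      rw [show c i + ((k i:ℝ) + 1) * Lr r m - c i = ((k i:ℝ) + 1) * Lr r m by ring,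
        abs_of_nonneg (by positivity), hg]
    · push_neg at h
      have hg : ((gn (k i) : ℝ)) = -((k i : ℝ) + 1) := by exact_mod_cast gn_of_neg h
      have hk' : (k i : ℝ) ≤ -1 := by
        have : k i ≤ -1 := by omega
        exact_mod_cast this
      rw [show c i + (k i:ℝ) * Lr r m - c i = (k i:ℝ) * Lr r m by ring,
        abs_of_nonpos (by nlinarith), hg]
      ring
  refine ⟨y, ?_, ?_⟩
  · rw [mem_closedBall, dist_pi_le_iff (by positivity)]
    intro i
    simp only [hy]
    rw [Real.dist_eq, ctr]
    split_ifs with h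
    · rw [show c i + ((k i:ℝ) + 1) * Lr r m - (c i + ((k i:ℝ) + 1/2) * Lr r m) = Lr r m / 2
        by ring, abs_of_nonneg (by positivity)]
    · rw [show c i + (k i:ℝ) * Lr r m - (c i + ((k i:ℝ) + 1/2) * Lr r m) = -(Lr r m / 2)
        by ring, abs_neg, abs_of_nonneg (by positivity)]
  · rw [← NL1 hr m]
    refine le_antisymm ((dist_pi_le_iff (by positivity)).2 fun i => ?_) ?_
    · rw [Real.dist_eq, hyabs i]
      have hle : gn (k i) ≤ Nn m := hk ▸ Finset.le_sup (f := fun i => gn (k i)) (Finset.mem_univ i)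
      have hle' : (gn (k i) : ℝ) ≤ (Nn m : ℝ) := by exact_mod_cast hle
      nlinarith
    · obtain ⟨j, -, hj⟩ := Finset.exists_mem_eq_sup (Finset.univ : Finset (Fin n))
        ⟨⟨0, hn⟩, Finset.mem_univ _⟩ (fun i => gn (k i))
      have hgj : gn (k j) = Nn m := hj.symm.trans hk
      have h2 := dist_le_pi_dist y c j
      rw [Real.dist_eq, hyabs j, hgj] at h2
      exact h2

end

lemma hyperplane_volume {n : ℕ} (i : Fin n) (a : ℝ) :
    volume {x : Fin n → ℝ | x i = a} = 0 := by
  have he : {x : Fin n → ℝ | x i = a}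
      = Set.pi Set.univ (Function.update (fun _ => (Set.univ : Set ℝ)) i {a}) := by
    ext x
    simp only [Set.mem_setOf_eq, Set.mem_pi, Set.mem_univ, forall_true_left,
      Function.update_apply]
    constructor
    · intro h j; by_cases hj : j = i <;> simp [hj, h]
    · intro h; have := h i; simpa using this
  rw [he, volume_pi_pi]
  exact Finset.prod_eq_zero (Finset.mem_univ i) (by simp)

lemma exists_coord {n : ℕ} (hn : 0 < n) (x c : Fin n → ℝ) :
    ∃ j, dist x c = |x j - c j| := by
  obtain ⟨j, -, hj⟩ := Finset.exists_mem_eq_sup (Finset.univ : Finset (Fin n))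
    ⟨⟨0, hn⟩, Finset.mem_univ _⟩ (fun i => nndist (x i) (c i))
  exact ⟨j, by rw [dist_pi_def, hj, coe_nndist, Real.dist_eq]⟩

lemma infEdist_sphere_eq {n : ℕ} (hn : 0 < n) (c x : Fin n → ℝ) {r : ℝ} (hr : 0 < r)
    (hx : dist x c ≤ r) :
    EMetric.infEdist x (sphere c r) = ENNReal.ofReal (r - dist x c) := by
  obtain ⟨y, hy, hxy⟩ : ∃ y, dist y c = r ∧ dist x y = r - dist x c := by
    rcases eq_or_lt_of_le (dist_nonneg (x := x) (y := c)) with hd | hd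
    · have hxc : x = c := dist_eq_zero.1 hd.symm
      refine ⟨fun i => c i + r, ?_, ?_⟩
      · refine le_antisymm ((dist_pi_le_iff hr.le).2 fun i => ?_) ?_
        · simp [Real.dist_eq, abs_of_nonneg hr.le]
        · have h := dist_le_pi_dist (fun i => c i + r) c ⟨0, hn⟩
          simp only [Real.dist_eq] at h
          calc r = |c ⟨0, hn⟩ + r - c ⟨0, hn⟩| := by rw [abs_of_nonneg] <;> [ring_nf; linarith]
            _ ≤ _ := h
      · subst hxc
        rw [← hd, sub_zero, dist_comm]
        refine le_antisymm ((dist_pi_le_iff hr.le).2 fun i => ?_) ?_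
        · simp [Real.dist_eq, abs_of_nonneg hr.le]
        · have h := dist_le_pi_dist (fun i => x i + r) x ⟨0, hn⟩
          simp only [Real.dist_eq] at h
          calc r = |x ⟨0, hn⟩ + r - x ⟨0, hn⟩| := by rw [abs_of_nonneg] <;> [ring_nf; linarith]
            _ ≤ _ := h
    · set d := dist x c with hdd
      have hd0 : d ≠ 0 := ne_of_gt hd
      have hrd1 : 1 ≤ r / d := (one_le_div (by linarith)).2 hx
      have hcoord : ∀ i, |x i - c i| ≤ d := fun i => by
        have := dist_le_pi_dist x c i; rwa [Real.dist_eq] at this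
      obtain ⟨j, hj⟩ := exists_coord hn x c
      refine ⟨fun i => c i + (r / d) * (x i - c i), ?_, ?_⟩
      · refine le_antisymm ((dist_pi_le_iff hr.le).2 fun i => ?_) ?_
        · have : |c i + r / d * (x i - c i) - c i| = (r / d) * |x i - c i| := by
            rw [show c i + r / d * (x i - c i) - c i = (r / d) * (x i - c i) by ring,
              abs_mul, abs_of_nonneg (by positivity)]
          rw [Real.dist_eq, this]
          calc (r/d) * |x i - c i| ≤ (r/d) * d := by
                apply mul_le_mul_of_nonneg_left (hcoord i) (by positivity)
            _ = r := by field_simp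
        · have h := dist_le_pi_dist (fun i => c i + (r / d) * (x i - c i)) c j
          rw [Real.dist_eq, show c j + r / d * (x j - c j) - c j = (r / d) * (x j - c j) by ring,
            abs_mul, abs_of_nonneg (by positivity), ← hj] at h
          calc r = (r / d) * d := by field_simp
            _ ≤ _ := h
      · have hcoord2 : ∀ i, |x i - (c i + (r / d) * (x i - c i))| = (r/d - 1) * |x i - c i| := by
          intro i
          rw [show x i - (c i + r / d * (x i - c i)) = -((r/d - 1) * (x i - c i)) by ring,
            abs_neg, abs_mul, abs_of_nonneg (by linarith)]
        refine le_antisymm ((dist_pi_le_iff (by linarith)).2 fun i => ?_) ?_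
        · rw [Real.dist_eq, hcoord2 i]
          calc (r/d - 1) * |x i - c i| ≤ (r/d - 1) * d :=
                mul_le_mul_of_nonneg_left (hcoord i) (by linarith)
            _ = r - d := by field_simp
        · have h := dist_le_pi_dist x (fun i => c i + (r / d) * (x i - c i)) j
          rw [Real.dist_eq, hcoord2 j, ← hj] at h
          calc r - d = (r/d - 1) * d := by field_simp
            _ ≤ _ := h
  refine le_antisymm ?_ ?_
  · calc EMetric.infEdist x (sphere c r) ≤ edist x y :=
        EMetric.infEdist_le_edist_of_mem (mem_sphere.2 hy)
      _ = ENNReal.ofReal (r - dist x c) := by rw [edist_dist, hxy]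
  · refine EMetric.le_infEdist.2 ?_
    intro z hz
    rw [edist_dist]
    apply ofReal_le_ofReal
    have hz' : dist z c = r := hz
    have h1 := dist_triangle z x c
    have h2 : dist z x = dist x z := dist_comm _ _
    linarith

end W17
namespace W17
noncomputable def CS {n : ℕ} (c : Fin n → ℝ) (r : ℝ) : Option (idx n) → (Fin n → ℝ)
  | none => c
  | some p => ctr c r p.1 p.2.1

noncomputable def RS (r : ℝ) {n : ℕ} : Option (idx n) → ℝ
  | none => r / 3
  | some p => Lr r p.1 / 2

@[simp] lemma CS_none {n : ℕ} (c : Fin n → ℝ) (r : ℝ) : CS c r none = c := rfl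
@[simp] lemma CS_some {n : ℕ} (c : Fin n → ℝ) (r : ℝ) (p : idx n) :
    CS c r (some p) = ctr c r p.1 p.2.1 := rfl
@[simp] lemma RS_none {n : ℕ} (r : ℝ) : RS r (none : Option (idx n)) = r / 3 := rfl
@[simp] lemma RS_some {n : ℕ} (r : ℝ) (p : idx n) : RS r (some p) = Lr r p.1 / 2 := rfl
end W17

/-- Whitney decomposition of an axis-parallel cube `Q' = ball c r` (sup metric):
countably many pairwise disjoint open subcubes whose side length equals their
distance to the boundary of `Q'` and whose union is `Q'` up to measure zero. -/
theorem stmt17 (n : ℕ) (hn : 0 < n) (c : Fin n → ℝ) (r : ℝ) (hr : 0 < r) :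
    ∃ (cs : ℕ → Fin n → ℝ) (rs : ℕ → ℝ),
      (∀ k, 0 < rs k) ∧
      (∀ k, ball (cs k) (rs k) ⊆ ball c r) ∧
      (Pairwise fun j k => Disjoint (ball (cs j) (rs j)) (ball (cs k) (rs k))) ∧
      (∀ k, ENNReal.ofReal (2 * rs k) =
        ⨅ x ∈ closure (ball (cs k) (rs k)), EMetric.infEdist x (frontier (ball c r))) ∧
      volume (ball c r \ ⋃ k, ball (cs k) (rs k)) = 0 := by
  classical
  haveI : Nonempty (Fin n) := ⟨⟨0, hn⟩⟩
  haveI hEnc : Encodable (W17.idx n) := Encodable.ofCountable _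
  have hsupc : ∀ m : ℕ,
      (Finset.univ.sup fun _ : Fin n => W17.gn ((W17.Nn m : ℤ))) = W17.Nn m := by
    intro m
    simp only [W17.gn_natCast]
    exact Finset.sup_const ⟨⟨0, hn⟩, Finset.mem_univ _⟩ _
  haveI hInf : Infinite (W17.idx n) :=
    Infinite.of_injective
      (fun m : ℕ => (⟨m, ⟨fun _ => (W17.Nn m : ℤ), hsupc m⟩⟩ : W17.idx n))
      (fun a b h => congrArg Sigma.fst h)
  haveI : Denumerable (W17.idx n) := Denumerable.ofEncodableOfInfinite _
  set e : Option (W17.idx n) ≃ ℕ := Denumerable.eqv (Option (W17.idx n)) with he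
  refine ⟨fun j => W17.CS c r (e.symm j), fun j => W17.RS r (e.symm j),
          ?_, ?_, ?_, ?_, ?_⟩
  -- positivity of radii
  · intro j
    rcases hj : e.symm j with - | ⟨m, k, hk⟩ <;> simp only [hj] <;>
      simp only [W17.RS_none, W17.RS_some]
    · positivity
    · have := W17.L_pos hr m; linarith
  -- subset
  · intro j
    rcases hj : e.symm j with - | ⟨m, k, hk⟩ <;> simp only [hj] <;>
      simp only [W17.RS_none, W17.RS_some, W17.CS_none, W17.CS_some] <;> intro x hx
    · exact mem_ball.2 (lt_trans (mem_ball.1 hx) (by linarith))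
    · have hd := W17.cube_dist hn c hr hk x hx
      have := W17.L_pos hr m
      exact mem_ball.2 (by linarith [hd.2])
  -- pairwise disjoint
  · have hcent : ∀ (m : ℕ) (k : Fin n → ℤ),
        (Finset.univ.sup fun i => W17.gn (k i)) = W17.Nn m →
        Disjoint (ball c (r / 3)) (ball (W17.ctr c r m k) (W17.Lr r m / 2)) := by
      intro m k hk
      rw [Set.disjoint_left]
      intro x hx1 hx2
      have h1 := mem_ball.1 hx1
      have h2 := (W17.cube_dist hn c hr hk x hx2).1
      have h3 := W17.L_anti hr (Nat.zero_le m)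
      have h4 := W17.L0 hr
      linarith
    have hshell : ∀ (m m' : ℕ) (k k' : Fin n → ℤ),
        (Finset.univ.sup fun i => W17.gn (k i)) = W17.Nn m →
        (Finset.univ.sup fun i => W17.gn (k' i)) = W17.Nn m' → m < m' →
        Disjoint (ball (W17.ctr c r m k) (W17.Lr r m / 2))
          (ball (W17.ctr c r m' k') (W17.Lr r m' / 2)) := by
      intro m m' k k' hk hk' hmm
      rw [Set.disjoint_left]
      intro x hx1 hx2
      have h1 := (W17.cube_dist hn c hr hk x hx1).2
      have h2 := (W17.cube_dist hn c hr hk' x hx2).1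
      have h3 : W17.Lr r m' ≤ W17.Lr r (m + 1) := W17.L_anti hr (by omega)
      have h4 := W17.L_half hr m
      linarith
    have hsame : ∀ (m : ℕ) (k k' : Fin n → ℤ), k ≠ k' →
        Disjoint (ball (W17.ctr c r m k) (W17.Lr r m / 2))
          (ball (W17.ctr c r m k') (W17.Lr r m / 2)) := by
      intro m k k' hkk
      rw [Set.disjoint_left]
      intro x hx1 hx2
      obtain ⟨i, hi⟩ : ∃ i, k i ≠ k' i := by
        by_contra h; push_neg at h; exact hkk (funext h)
      have h1 := (W17.mem_cube_iff c hr m k x).1 hx1 i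
      have h2 := (W17.mem_cube_iff c hr m k' x).1 hx2 i
      have hL := W17.L_pos hr m
      rcases lt_or_gt_of_ne hi with h | h
      · have hc : ((k i : ℝ) + 1) ≤ (k' i : ℝ) := by exact_mod_cast Int.add_one_le_iff.2 h
        nlinarith [h1.2, h2.1]
      · have hc : ((k' i : ℝ) + 1) ≤ (k i : ℝ) := by exact_mod_cast Int.add_one_le_iff.2 h
        nlinarith [h1.1, h2.2]
    intro a b hab
    have hne : e.symm a ≠ e.symm b := fun h => hab (e.symm.injective h)
    rcases ha : e.symm a with - | ⟨m, k, hk⟩ <;> rcases hb : e.symm b with - | ⟨m', k', hk'⟩ <;>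
      simp only [ha, hb] <;>
      simp only [W17.RS_none, W17.RS_some, W17.CS_none, W17.CS_some]
    · rw [ha, hb] at hne; exact absurd rfl hne
    · exact hcent m' k' hk'
    · exact (hcent m k hk).symm
    · rcases Nat.lt_trichotomy m m' with h | h | h
      · exact hshell _ _ _ _ hk hk' h
      · subst h
        refine hsame m k k' ?_
        rintro rfl
        rw [ha, hb] at hne
        exact hne rfl
      · exact (hshell _ _ _ _ hk' hk h).symm
  -- the Whitney property
  · intro j
    rcases hj : e.symm j with - | ⟨m, k, hk⟩ <;> simp only [hj] <;>
      simp only [W17.RS_none, W17.RS_some, W17.CS_none, W17.CS_some]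
    · rw [closure_ball c (by positivity : (0:ℝ) < r / 3).ne', frontier_ball c hr.ne']
      refine le_antisymm (le_iInf₂ fun x hx => ?_) ?_
      · have hxd : dist x c ≤ r / 3 := mem_closedBall.1 hx
        rw [W17.infEdist_sphere_eq hn c x hr (by linarith)]
        exact ofReal_le_ofReal (by linarith)
      · set y : Fin n → ℝ := fun i => c i + r / 3 with hy
        have h1 : dist y c ≤ r / 3 := by
          refine (dist_pi_le_iff (by positivity)).2 fun i => ?_
          rw [Real.dist_eq, hy]
          rw [show c i + r / 3 - c i = r / 3 by ring, abs_of_nonneg (by positivity)]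
        have h2 : r / 3 ≤ dist y c := by
          have h := dist_le_pi_dist y c ⟨0, hn⟩
          rw [Real.dist_eq, hy, show c ⟨0, hn⟩ + r / 3 - c ⟨0, hn⟩ = r / 3 by ring,
            abs_of_nonneg (by positivity)] at h
          exact h
        have hyd : dist y c = r / 3 := le_antisymm h1 h2
        calc (⨅ x ∈ closedBall c (r / 3), EMetric.infEdist x (sphere c r))
            ≤ EMetric.infEdist y (sphere c r) := iInf₂_le y (mem_closedBall.2 h1)
          _ = ENNReal.ofReal (2 * (r / 3)) := by
              rw [W17.infEdist_sphere_eq hn c y hr (by linarith), hyd]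
              congr 1; ring
    · have hL := W17.L_pos hr m
      rw [closure_ball _ (by positivity : (0:ℝ) < W17.Lr r m / 2).ne', frontier_ball c hr.ne']
      refine le_antisymm (le_iInf₂ fun x hx => ?_) ?_
      · have hxd := W17.cube_cb_dist hn c hr hk x hx
        rw [W17.infEdist_sphere_eq hn c x hr (by linarith)]
        exact ofReal_le_ofReal (by linarith)
      · obtain ⟨y, hy, hyd⟩ := W17.cube_corner hn c hr hk
        calc (⨅ x ∈ closedBall (W17.ctr c r m k) (W17.Lr r m / 2),
                EMetric.infEdist x (sphere c r))
            ≤ EMetric.infEdist y (sphere c r) := iInf₂_le y hy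
          _ = ENNReal.ofReal (2 * (W17.Lr r m / 2)) := by
              rw [W17.infEdist_sphere_eq hn c y hr (by linarith), hyd]
              congr 1; ring
  -- measure zero
  · have hZ : volume (⋃ (m : ℕ) (i : Fin n) (z : ℤ),
        {x : Fin n → ℝ | x i = c i + z * W17.Lr r m}) = 0 := by
      refine measure_iUnion_null fun m => measure_iUnion_null fun i =>
        measure_iUnion_null fun z => ?_
      exact W17.hyperplane_volume i (c i + z * W17.Lr r m)
    refine measure_mono_null ?_ hZ
    rintro x ⟨hxb, hxu⟩
    by_contra hxZ
    simp only [Set.mem_iUnion, Set.mem_setOf_eq, not_exists] at hxZ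
    apply hxu
    rw [Set.mem_iUnion]
    have hdr : dist x c < r := mem_ball.1 hxb
    have hL0 := W17.L0 hr
    rcases lt_or_ge (dist x c) (r - 2 * W17.Lr r 0) with hcase | hcase
    · refine ⟨e none, ?_⟩
      simp only [Equiv.symm_apply_apply]
      simp only [W17.RS_none, W17.CS_none]
      rw [mem_ball]
      linarith
    · -- find the shell
      have hP : ∃ M, dist x c < r - 2 * W17.Lr r M := by
        obtain ⟨M, hM⟩ := exists_pow_lt_of_lt_one
          (show (0:ℝ) < (r - dist x c) / (2 * (r / 3)) by
            apply div_pos (by linarith) (by positivity))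
          (by norm_num : (1/2 : ℝ) < 1)
        rw [lt_div_iff₀ (by positivity)] at hM
        refine ⟨M, ?_⟩
        have hLM : W17.Lr r M = (r / 3) * (1 / 2) ^ M := by
          unfold W17.Lr
          rw [div_pow, one_pow]
          field_simp
        have h2 : 2 * W17.Lr r M = (1/2 : ℝ) ^ M * (2 * (r / 3)) := by rw [hLM]; ring
        linarith
      have hM0pos : 0 < Nat.find hP :=
        Nat.pos_of_ne_zero fun h => by
          have := Nat.find_spec hP
          rw [h] at this
          linarith
      set m := Nat.find hP - 1 with hm
      have hup : dist x c < r - 2 * W17.Lr r (m + 1) := by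
        have hh : m + 1 = Nat.find hP := by omega
        rw [hh]; exact Nat.find_spec hP
      have hlow : r - 2 * W17.Lr r m ≤ dist x c :=
        not_lt.1 (Nat.find_min hP (by omega))
      have hL := W17.L_pos hr m
      obtain ⟨j0, hj0⟩ := W17.exists_coord hn x c
      -- the lower bound is strict since x is off the grid
      have hlow' : r - 2 * W17.Lr r m < dist x c := by
        rcases eq_or_lt_of_le hlow with heq | h
        · exfalso
          have habs : |x j0 - c j0| = (W17.Nn m : ℝ) * W17.Lr r m := by
            rw [← hj0, ← heq, W17.NL hr m]
          rcases (abs_eq (by positivity)).1 habs with h' | h'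
          · exact hxZ m j0 ((W17.Nn m : ℤ)) (by push_cast; linarith)
          · exact hxZ m j0 (-(W17.Nn m : ℤ)) (by push_cast; linarith)
        · exact h
      -- define the cube
      set k : Fin n → ℤ := fun i => ⌊(x i - c i) / W17.Lr r m⌋ with hkdef
      have hbounds : ∀ i, (k i : ℝ) * W17.Lr r m < x i - c i ∧
          x i - c i < ((k i : ℝ) + 1) * W17.Lr r m := by
        intro i
        have h1 : (k i : ℝ) ≤ (x i - c i) / W17.Lr r m := Int.floor_le _
        have h2 : (x i - c i) / W17.Lr r m < (k i : ℝ) + 1 := Int.lt_floor_add_one _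
        have h1' : (k i : ℝ) * W17.Lr r m ≤ x i - c i := (le_div_iff₀ hL).1 h1
        have h2' : x i - c i < ((k i : ℝ) + 1) * W17.Lr r m := (div_lt_iff₀ hL).1 h2
        refine ⟨h1'.lt_of_ne fun h => ?_, h2'⟩
        exact hxZ m i (k i) (by linarith)
      have hmem : x ∈ ball (W17.ctr c r m k) (W17.Lr r m / 2) :=
        (W17.mem_cube_iff c hr m k x).2 hbounds
      have habs : ∀ i, (W17.gn (k i) : ℝ) * W17.Lr r m < |x i - c i| ∧
          |x i - c i| < ((W17.gn (k i) : ℝ) + 1) * W17.Lr r m :=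
        fun i => W17.abs_bounds_lt hL (hbounds i).1 (hbounds i).2
      have hdle : ∀ i, |x i - c i| ≤ dist x c := fun i => by
        have := dist_le_pi_dist x c i
        rwa [Real.dist_eq] at this
      have hGle : ∀ i, W17.gn (k i) ≤ W17.gn (k j0) := by
        intro i
        have hh : (W17.gn (k i) : ℝ) * W17.Lr r m < ((W17.gn (k j0) : ℝ) + 1) * W17.Lr r m := by
          calc (W17.gn (k i) : ℝ) * W17.Lr r m < |x i - c i| := (habs i).1
            _ ≤ dist x c := hdle i
            _ = |x j0 - c j0| := hj0
            _ < ((W17.gn (k j0) : ℝ) + 1) * W17.Lr r m := (habs j0).2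
        have := lt_of_mul_lt_mul_right hh hL.le
        have : W17.gn (k i) < W17.gn (k j0) + 1 := by exact_mod_cast this
        omega
      have hsup : (Finset.univ.sup fun i => W17.gn (k i)) = W17.gn (k j0) :=
        le_antisymm (Finset.sup_le fun i _ => hGle i)
          (Finset.le_sup (f := fun i => W17.gn (k i)) (Finset.mem_univ j0))
      have hNN : W17.gn (k j0) = W17.Nn m := by
        have hA : (W17.gn (k j0) : ℝ) * W17.Lr r m < dist x c := by
          rw [hj0]; exact (habs j0).1
        have hB : dist x c < ((W17.gn (k j0) : ℝ) + 1) * W17.Lr r m := by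
          rw [hj0]; exact (habs j0).2
        have hC : (W17.Nn m : ℝ) * W17.Lr r m < dist x c := by
          rw [W17.NL hr m]; exact hlow'
        have hD : dist x c < ((W17.Nn m : ℝ) + 1) * W17.Lr r m := by
          rw [W17.NL1 hr m]
          have := W17.L_half hr m
          linarith
        have h1 : (W17.gn (k j0) : ℝ) < (W17.Nn m : ℝ) + 1 :=
          lt_of_mul_lt_mul_right (lt_trans hA hD) hL.le
        have h2 : (W17.Nn m : ℝ) < (W17.gn (k j0) : ℝ) + 1 :=
          lt_of_mul_lt_mul_right (lt_trans hC hB) hL.le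
        have h1' : W17.gn (k j0) < W17.Nn m + 1 := by exact_mod_cast h1
        have h2' : W17.Nn m < W17.gn (k j0) + 1 := by exact_mod_cast h2
        omega
      refine ⟨e (some ⟨m, k, hsup.trans hNN⟩), ?_⟩
      simp only [Equiv.symm_apply_apply]
      simpa only [W17.RS_some, W17.CS_some] using hmem
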